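/- arXiv:2508.10347 — 4 statements merged into one kernel-verified Lean document; each statement's English description precedes it below -/
import Mathlib

section
/- Fix ρ̄ > 0, a ∈ ℝ with a ≠ 0, and T ∈ ℝ. Define H(ρ,ũ) = (ρ, ρ·ũ) and G(ρ,ũ) = (ρ·(ũ+T)·(1 − (ρ/ρ̄)^a), ρ·ũ·(ũ+T)·(1 − (ρ/ρ̄)^a)) as maps from (0,∞) × ℝ to ℝ². Then for every ρ > 0 and ũ ∈ ℝ, the vector R₀(ρ,ũ) = (ρ·(1 − (ρ/ρ̄)^a), a·(ρ/ρ̄)^a·(ũ + T)) satisfies (DG(ρ,ũ) − λ₀(ρ,ũ)·DH(ρ,ũ))(R₀(ρ,ũ)) = 0, where D denotes the Fréchet derivative with respect to (ρ,ũ) and λ₀(ρ,ũ) = (ũ + T)·(1 − (ρ/ρ̄)^a). In particular λ₀ is an eigenvalue of the quasilinear system with eigenvector R₀. -/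
/-- R₀(ρ,u) = (ρ·(1−(ρ/ρ̄)^a), a·(ρ/ρ̄)^a·(u+T)) is an eigenvector
of the quasilinear system with eigenvalue λ₀(ρ,u) = (u + T)·(1 − (ρ/ρ̄)^a). -/
theorem eigenvector_zero_family
    (ρbar : ℝ) (hρbar : 0 < ρbar) (a : ℝ) (ha : a ≠ 0) (T : ℝ) :
    ∀ ρ u : ℝ, 0 < ρ →
      fderiv ℝ (fun p : ℝ × ℝ =>
          (p.1 * (p.2 + T) * (1 - (p.1 / ρbar) ^ a),
           p.1 * p.2 * (p.2 + T) * (1 - (p.1 / ρbar) ^ a))) (ρ, u)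
          (ρ * (1 - (ρ / ρbar) ^ a), a * (ρ / ρbar) ^ a * (u + T))
        - ((u + T) * (1 - (ρ / ρbar) ^ a)) •
          fderiv ℝ (fun p : ℝ × ℝ => (p.1, p.1 * p.2)) (ρ, u)
          (ρ * (1 - (ρ / ρbar) ^ a), a * (ρ / ρbar) ^ a * (u + T)) = 0 := by
  intro ρ u hρ
  set fst := ContinuousLinearMap.fst ℝ ℝ ℝ
  set snd := ContinuousLinearMap.snd ℝ ℝ ℝ
  -- derivative of s(p) = (p.1/ρbar)^a
  have hs : HasFDerivAt (fun p : ℝ × ℝ => (p.1 / ρbar) ^ a)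
      ((a * (ρ / ρbar) ^ (a - 1)) • (ρbar⁻¹ • fst)) (ρ, u) := by
    have h1 : HasFDerivAt (fun p : ℝ × ℝ => p.1 / ρbar) (ρbar⁻¹ • fst) (ρ, u) := by
      have := (hasFDerivAt_fst (𝕜 := ℝ) (p := ((ρ, u) : ℝ × ℝ))).const_mul ρbar⁻¹
      simpa [fst, div_eq_inv_mul, smul_smul] using this
    have h2 : HasDerivAt (fun x : ℝ => x ^ a) (a * (ρ / ρbar) ^ (a - 1)) (ρ / ρbar) :=
      Real.hasDerivAt_rpow_const (Or.inl (by positivity))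
    exact h2.comp_hasFDerivAt ((ρ, u) : ℝ × ℝ) h1
  have hB : HasFDerivAt (fun p : ℝ × ℝ => 1 - (p.1 / ρbar) ^ a)
      (0 - (a * (ρ / ρbar) ^ (a - 1)) • (ρbar⁻¹ • fst)) (ρ, u) :=
    (hasFDerivAt_const 1 _).sub hs
  have hA : HasFDerivAt (fun p : ℝ × ℝ => p.1 * (p.2 + T))
      (ρ • snd + (u + T) • fst) (ρ, u) :=
    (hasFDerivAt_fst (𝕜 := ℝ) (p := ((ρ, u) : ℝ × ℝ))).mul ((hasFDerivAt_snd).add_const T)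
  have hf1 : HasFDerivAt (fun p : ℝ × ℝ => p.1 * (p.2 + T) * (1 - (p.1 / ρbar) ^ a))
      ((ρ * (u + T)) • (0 - (a * (ρ / ρbar) ^ (a - 1)) • (ρbar⁻¹ • fst))
        + (1 - (ρ / ρbar) ^ a) • (ρ • snd + (u + T) • fst)) (ρ, u) := hA.mul hB
  have hf2 : HasFDerivAt (fun p : ℝ × ℝ => p.1 * p.2 * (p.2 + T) * (1 - (p.1 / ρbar) ^ a))
      (u • ((ρ * (u + T)) • (0 - (a * (ρ / ρbar) ^ (a - 1)) • (ρbar⁻¹ • fst))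
        + (1 - (ρ / ρbar) ^ a) • (ρ • snd + (u + T) • fst))
        + (ρ * (u + T) * (1 - (ρ / ρbar) ^ a)) • snd) (ρ, u) := by
    have := (hasFDerivAt_snd (𝕜 := ℝ) (p := ((ρ, u) : ℝ × ℝ))).mul hf1
    have e : (fun p : ℝ × ℝ => p.1 * p.2 * (p.2 + T) * (1 - (p.1 / ρbar) ^ a))
        = (fun p : ℝ × ℝ => p.2 * (p.1 * (p.2 + T) * (1 - (p.1 / ρbar) ^ a))) := by
      funext p
      ring
    rw [e]
    exact this
  have hG := hf1.prodMk hf2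
  have hH : HasFDerivAt (fun p : ℝ × ℝ => (p.1, p.1 * p.2))
      (fst.prod (ρ • snd + u • fst)) (ρ, u) :=
    (hasFDerivAt_fst (𝕜 := ℝ) (p := ((ρ, u) : ℝ × ℝ))).prodMk ((hasFDerivAt_fst (𝕜 := ℝ) (p := ((ρ, u) : ℝ × ℝ))).mul hasFDerivAt_snd)
  rw [hG.fderiv, hH.fderiv]
  have hk : (ρ / ρbar) ^ (a - 1) = (ρ / ρbar) ^ a * (ρ / ρbar)⁻¹ := by
    rw [Real.rpow_sub (by positivity), Real.rpow_one, div_eq_mul_inv]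
  set k := (ρ / ρbar) ^ a
  simp only [ContinuousLinearMap.prod_apply, ContinuousLinearMap.add_apply,
    ContinuousLinearMap.smul_apply, ContinuousLinearMap.sub_apply,
    ContinuousLinearMap.zero_apply, ContinuousLinearMap.coe_fst',
    ContinuousLinearMap.coe_snd', fst, snd, Prod.smul_mk, Prod.mk_sub_mk,
    smul_eq_mul, Prod.mk_eq_zero]
  constructor <;>
  · rw [hk]
    field_simp
    ring
end

section
/- Fix ρ̄ > 0, a ∈ ℝ with a ≠ 0, and T ∈ ℝ. Let λ₀(ρ,ũ) = (ũ + T)·(1 − (ρ/ρ̄)^a) on (0,∞) × ℝ and let R₀(ρ,ũ) = (ρ·(1 − (ρ/ρ̄)^a), a·(ρ/ρ̄)^a·(ũ + T)). Then the 0-characteristic family is linearly degenerate: for every ρ > 0 and ũ ∈ ℝ, the directional derivative of λ₀ at (ρ,ũ) in the direction R₀(ρ,ũ) vanishes, i.e. Dλ₀(ρ,ũ)(R₀(ρ,ũ)) = 0, where D denotes the Fréchet derivative with respect to (ρ,ũ). -/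
/-- The 0-characteristic family is linearly degenerate:
Dλ₀(ρ,u)(R₀(ρ,u)) = 0. -/
theorem zero_family_linearly_degenerate
    (ρbar : ℝ) (hρbar : 0 < ρbar) (a : ℝ) (ha : a ≠ 0) (T : ℝ) :
    ∀ ρ u : ℝ, 0 < ρ →
      fderiv ℝ (fun p : ℝ × ℝ => (p.2 + T) * (1 - (p.1 / ρbar) ^ a)) (ρ, u)
        (ρ * (1 - (ρ / ρbar) ^ a), a * (ρ / ρbar) ^ a * (u + T)) = 0 := by
  intro ρ u hρ
  set x : ℝ := ρ / ρbar with hxdef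
  have hxpos : 0 < x := div_pos hρ hρbar
  -- derivative of t ↦ (t/ρbar)^a at ρ
  have hd1 : HasDerivAt (fun t : ℝ => t / ρbar) (1 / ρbar) ρ := by
    simpa using (hasDerivAt_id ρ).div_const ρbar
  have hd2 : HasDerivAt (fun y : ℝ => y ^ a) (a * x ^ (a - 1)) x :=
    Real.hasDerivAt_rpow_const (Or.inl hxpos.ne')
  have hd : HasDerivAt (fun t : ℝ => (t / ρbar) ^ a)
      (a * x ^ (a - 1) * (1 / ρbar)) ρ := by have := hd2.comp ρ hd1; exact this
  have hh : HasFDerivAt (fun p : ℝ × ℝ => 1 - (p.1 / ρbar) ^ a)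
      (-((a * x ^ (a - 1) * ρbar⁻¹) • ContinuousLinearMap.fst ℝ ℝ ℝ)) (ρ, u) := by
    have := (hd.comp_hasFDerivAt (ρ, u) (hasFDerivAt_fst (𝕜 := ℝ) (p := (ρ, u)))).const_sub 1
    simpa [one_div] using this
  have hg : HasFDerivAt (fun p : ℝ × ℝ => p.2 + T)
      (ContinuousLinearMap.snd ℝ ℝ ℝ) (ρ, u) :=
    (hasFDerivAt_snd (𝕜 := ℝ) (p := (ρ, u))).add_const T
  have hmul : HasFDerivAt (fun p : ℝ × ℝ => (p.2 + T) * (1 - (p.1 / ρbar) ^ a)) _ (ρ, u) := hg.mul hh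
  rw [hmul.fderiv]
  simp only [ContinuousLinearMap.add_apply, ContinuousLinearMap.smul_apply,
    ContinuousLinearMap.coe_fst', ContinuousLinearMap.coe_snd', ContinuousLinearMap.neg_apply, smul_eq_mul]
  -- key: ρ * x^(a-1) / ρbar = x^a
  have key : x ^ (a - 1) * ρ / ρbar = x ^ a := by
    rw [Real.rpow_sub hxpos, Real.rpow_one]
    field_simp [hxdef]
    rw [hxdef, div_mul_cancel₀ ρ hρbar.ne']
  simp only [hxdef] at key ⊢
  linear_combination (-(u + T) * a * (1 - (ρ / ρbar) ^ a)) * key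
end

section
/- Fix ρ̄ > 0 and T ∈ ℝ, and suppose either a > 0 or a < −1. Let ρ_L, ρ_R > 0 with ρ_L ≠ ρ_R and let ũ ∈ ℝ with ũ + T > 0. Set λ_a(ρ,ũ) = (ũ + T)·(1 − (a+1)·(ρ/ρ̄)^a) and s_a = (ũ + T)·(1 − (ρ_L·(ρ_L/ρ̄)^a − ρ_R·(ρ_R/ρ̄)^a)/(ρ_L − ρ_R)). Then the Lax admissibility condition λ_a(ρ_R,ũ) < s_a < λ_a(ρ_L,ũ) holds if and only if ρ_R > ρ_L (i.e. the a-shock lies to the right of the left state in density). -/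
open Real Set

private lemma deriv_mono_aux (a : ℝ) (ha : 0 < a ∨ a < -1) {s t : ℝ}
    (hs : 0 < s) (hst : s < t) : (a + 1) * s ^ a < (a + 1) * t ^ a := by
  rcases ha with h | h
  · have := Real.rpow_lt_rpow hs.le hst h
    nlinarith [this]
  · have := Real.rpow_lt_rpow_of_neg hs hst (by linarith : a < 0)
    nlinarith [this]

private lemma slope_key (a : ℝ) (ha : 0 < a ∨ a < -1) {x y : ℝ}
    (hx : 0 < x) (hxy : x < y) :
    (a + 1) * x ^ a < (y ^ (a + 1) - x ^ (a + 1)) / (y - x)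
      ∧ (y ^ (a + 1) - x ^ (a + 1)) / (y - x) < (a + 1) * y ^ a := by
  have hcont : ContinuousOn (fun t : ℝ => t ^ (a + 1)) (Icc x y) := fun t ht =>
    (Real.continuousAt_rpow_const t (a + 1)
      (Or.inl (ne_of_gt (lt_of_lt_of_le hx ht.1)))).continuousWithinAt
  have hderiv : ∀ t ∈ Ioo x y, HasDerivAt (fun t : ℝ => t ^ (a + 1)) ((a + 1) * t ^ a) t := by
    intro t ht
    have := Real.hasDerivAt_rpow_const (x := t) (p := a + 1)
      (Or.inl (ne_of_gt (hx.trans ht.1)))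
    simpa [add_sub_cancel_right] using this
  obtain ⟨c, hc, hceq⟩ := exists_hasDerivAt_eq_slope (fun t : ℝ => t ^ (a + 1))
    (fun t => (a + 1) * t ^ a) hxy hcont hderiv
  rw [← hceq]
  exact ⟨deriv_mono_aux a ha hx hc.1, deriv_mono_aux a ha (hx.trans hc.1) hc.2⟩

/-- For a > 0 or a < −1 and ũ + T > 0, the Lax admissibility
condition for the a-shock holds iff ρ_R > ρ_L. -/
theorem lax_shock_convex_case
    (ρbar : ℝ) (hρbar : 0 < ρbar) (T : ℝ) (a : ℝ) (ha : 0 < a ∨ a < -1)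
    (ρL ρR : ℝ) (hρL : 0 < ρL) (hρR : 0 < ρR) (hne : ρL ≠ ρR)
    (u : ℝ) (hu : 0 < u + T) :
    ((u + T) * (1 - (a + 1) * (ρR / ρbar) ^ a)
        < (u + T) * (1 - (ρL * (ρL / ρbar) ^ a - ρR * (ρR / ρbar) ^ a) / (ρL - ρR))
      ∧ (u + T) * (1 - (ρL * (ρL / ρbar) ^ a - ρR * (ρR / ρbar) ^ a) / (ρL - ρR))
        < (u + T) * (1 - (a + 1) * (ρL / ρbar) ^ a))
    ↔ ρR > ρL := by
  have hc : 0 < ρbar ^ a := Real.rpow_pos_of_pos hρbar a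
  -- rewrite (ρ/ρbar)^a = ρ^a / ρbar^a and ρ * ρ^a = ρ^(a+1)
  have hdiv : ∀ ρ : ℝ, 0 < ρ → (ρ / ρbar) ^ a = ρ ^ a / ρbar ^ a := fun ρ hρ =>
    Real.div_rpow hρ.le hρbar.le a
  have hmul : ∀ ρ : ℝ, 0 < ρ → ρ * (ρ ^ a / ρbar ^ a) = ρ ^ (a + 1) / ρbar ^ a := by
    intro ρ hρ
    rw [Real.rpow_add_one (ne_of_gt hρ)]
    ring
  rw [hdiv ρL hρL, hdiv ρR hρR, hmul ρL hρL, hmul ρR hρR]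
  have hslope : (ρL ^ (a + 1) / ρbar ^ a - ρR ^ (a + 1) / ρbar ^ a) / (ρL - ρR)
      = ((ρL ^ (a + 1) - ρR ^ (a + 1)) / (ρL - ρR)) / ρbar ^ a := by
    rw [← sub_div, div_div, div_div, mul_comm]
  rw [hslope]
  set S := (ρL ^ (a + 1) - ρR ^ (a + 1)) / (ρL - ρR) with hS
  constructor
  · rintro ⟨h1, h2⟩
    by_contra hlt
    have hRL : ρR < ρL := lt_of_le_of_ne (not_lt.mp hlt) (Ne.symm hne)
    obtain ⟨k1, k2⟩ := slope_key a ha hρR hRL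
    have hSeq : S = (ρL ^ (a + 1) - ρR ^ (a + 1)) / (ρL - ρR) := hS
    -- from h1 : (u+T)(1 - (a+1)ρR^a/c) < (u+T)(1 - S/c)
    have h1' : S / ρbar ^ a < (a + 1) * (ρR ^ a / ρbar ^ a) := by
      have := (mul_lt_mul_iff_right₀ hu).mp h1
      linarith
    have h1'' : S < (a + 1) * ρR ^ a := by
      rw [mul_div_assoc'] at h1'
      exact (div_lt_div_iff_of_pos_right hc).mp h1'
    -- but k2 : slope from ρR to ρL < (a+1) ρL^a, k1 : (a+1) ρR^a < slope
    have : (a + 1) * ρR ^ a < S := hS ▸ k1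
    linarith
  · intro hLR
    obtain ⟨k1, k2⟩ := slope_key a ha hρL hLR
    have hflip : (ρR ^ (a + 1) - ρL ^ (a + 1)) / (ρR - ρL) = S := by
      rw [hS, ← neg_sub (ρR ^ (a + 1)), ← neg_sub ρR, neg_div_neg_eq]
    have hSk1 : (a + 1) * ρL ^ a < S := hflip ▸ k1
    have hSk2 : S < (a + 1) * ρR ^ a := hflip ▸ k2
    constructor
    · apply (mul_lt_mul_iff_right₀ hu).mpr
      have : S / ρbar ^ a < (a + 1) * ρR ^ a / ρbar ^ a :=
        (div_lt_div_iff_of_pos_right hc).mpr hSk2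
      rw [mul_div_assoc] at this
      linarith
    · apply (mul_lt_mul_iff_right₀ hu).mpr
      have : (a + 1) * ρL ^ a / ρbar ^ a < S / ρbar ^ a :=
        (div_lt_div_iff_of_pos_right hc).mpr hSk1
      rw [mul_div_assoc] at this
      linarith
end

section
/- Fix ρ̄ > 0, T ∈ ℝ, and a ∈ ℝ with −1 < a < 0. Let ρ_L, ρ_R > 0 with ρ_L ≠ ρ_R and let ũ ∈ ℝ with ũ + T > 0. Set λ_a(ρ,ũ) = (ũ + T)·(1 − (a+1)·(ρ/ρ̄)^a) and s_a = (ũ + T)·(1 − (ρ_L·(ρ_L/ρ̄)^a − ρ_R·(ρ_R/ρ̄)^a)/(ρ_L − ρ_R)). Then the Lax admissibility condition λ_a(ρ_R,ũ) < s_a < λ_a(ρ_L,ũ) holds if and only if ρ_R < ρ_L (i.e. the a-shock lies to the left of the left state in density). -/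
open Real Set

lemma slope_bounds (a : ℝ) (ha₁ : -1 < a) (ha₂ : a < 0) {x y : ℝ}
    (hx : 0 < x) (hxy : x < y) :
    (a + 1) * y ^ a < (y ^ (a + 1) - x ^ (a + 1)) / (y - x) ∧
      (y ^ (a + 1) - x ^ (a + 1)) / (y - x) < (a + 1) * x ^ a := by
  have hy : 0 < y := hx.trans hxy
  have hcont : ContinuousOn (fun t : ℝ => t ^ (a + 1)) (Icc x y) := by
    apply ContinuousOn.rpow_const continuousOn_id
    intro t ht
    exact Or.inl (ne_of_gt (lt_of_lt_of_le hx ht.1))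
  have hderiv : ∀ t ∈ Ioo x y, HasDerivAt (fun t : ℝ => t ^ (a + 1)) ((a + 1) * t ^ a) t := by
    intro t ht
    have := Real.hasDerivAt_rpow_const (p := a + 1) (x := t) (Or.inl (ne_of_gt (hx.trans ht.1)))
    simpa using this
  obtain ⟨c, hc, hceq⟩ := exists_hasDerivAt_eq_slope _ _ hxy hcont hderiv
  have hca : 0 < c := hx.trans hc.1
  have h1 : y ^ a < c ^ a := Real.rpow_lt_rpow_of_neg hca hc.2 ha₂
  have h2 : c ^ a < x ^ a := Real.rpow_lt_rpow_of_neg hx hc.1 ha₂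
  have hap : 0 < a + 1 := by linarith
  constructor
  · rw [← hceq]; exact (mul_lt_mul_iff_right₀ hap).2 h1
  · rw [← hceq]; exact (mul_lt_mul_iff_right₀ hap).2 h2

/-- For −1 < a < 0 and ũ + T > 0, the Lax admissibility
condition for the a-shock holds iff ρ_R < ρ_L. -/
theorem lax_shock_concave_case
    (ρbar : ℝ) (hρbar : 0 < ρbar) (T : ℝ) (a : ℝ) (ha₁ : -1 < a) (ha₂ : a < 0)
    (ρL ρR : ℝ) (hρL : 0 < ρL) (hρR : 0 < ρR) (hne : ρL ≠ ρR)
    (u : ℝ) (hu : 0 < u + T) :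
    ((u + T) * (1 - (a + 1) * (ρR / ρbar) ^ a)
        < (u + T) * (1 - (ρL * (ρL / ρbar) ^ a - ρR * (ρR / ρbar) ^ a) / (ρL - ρR))
      ∧ (u + T) * (1 - (ρL * (ρL / ρbar) ^ a - ρR * (ρR / ρbar) ^ a) / (ρL - ρR))
        < (u + T) * (1 - (a + 1) * (ρL / ρbar) ^ a))
    ↔ ρR < ρL := by
  have hc : 0 < ρbar ^ a := Real.rpow_pos_of_pos hρbar a
  have hdiv : ∀ ρ : ℝ, 0 < ρ → (ρ / ρbar) ^ a = ρ ^ a / ρbar ^ a := fun ρ hρ =>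
    Real.div_rpow hρ.le hρbar.le a
  have hmul : ∀ ρ : ℝ, 0 < ρ → ρ * (ρ ^ a / ρbar ^ a) = ρ ^ (a + 1) / ρbar ^ a := by
    intro ρ hρ
    rw [Real.rpow_add hρ, Real.rpow_one]
    ring
  rw [hdiv ρL hρL, hdiv ρR hρR, hmul ρL hρL, hmul ρR hρR]
  -- reduce to slope inequalities
  have key : ∀ A B : ℝ, ((u + T) * (1 - A) < (u + T) * (1 - B)) ↔ B < A := by
    intro A B
    rw [mul_lt_mul_iff_right₀ hu, sub_lt_sub_iff_left]
  rw [key, key]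
  have hS : (ρL ^ (a + 1) / ρbar ^ a - ρR ^ (a + 1) / ρbar ^ a) / (ρL - ρR)
      = ((ρL ^ (a + 1) - ρR ^ (a + 1)) / (ρL - ρR)) / ρbar ^ a := by
    field_simp
  have hL : (a + 1) * (ρL ^ a / ρbar ^ a) = ((a + 1) * ρL ^ a) / ρbar ^ a := by ring
  have hR : (a + 1) * (ρR ^ a / ρbar ^ a) = ((a + 1) * ρR ^ a) / ρbar ^ a := by ring
  rw [hS, hL, hR, div_lt_div_iff_of_pos_right hc, div_lt_div_iff_of_pos_right hc]
  constructor
  · rintro ⟨h1, h2⟩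
    rcases hne.lt_or_gt with hlt | hlt
    · exfalso
      obtain ⟨b1, b2⟩ := slope_bounds a ha₁ ha₂ hρL hlt
      -- slope with (x,y)=(ρL,ρR): (ρR^(a+1)-ρL^(a+1))/(ρR-ρL) = (ρL^(a+1)-ρR^(a+1))/(ρL-ρR)
      have hsym : (ρR ^ (a + 1) - ρL ^ (a + 1)) / (ρR - ρL)
          = (ρL ^ (a + 1) - ρR ^ (a + 1)) / (ρL - ρR) := by
        rw [← neg_sub (ρL ^ (a+1)), ← neg_sub ρL, neg_div_neg_eq]
      rw [hsym] at b1 b2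
      linarith
    · exact hlt
  · intro hlt
    obtain ⟨b1, b2⟩ := slope_bounds a ha₁ ha₂ hρR hlt
    exact ⟨b2, b1⟩
end
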